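/- For every integer $n > 3$, the Fennessey-Larcombe-French sequence satisfies $\dfrac{V_n}{V_{n-1}} \geq \dfrac{8n(3n^2+5n+1) + \sqrt{64(n^6 + 6n^5 + 15n^4 + 26n^3 + 25n^2 + 8n)}}{2n(n+1)^2}$; that is, $V_n/V_{n-1} \geq \big(-b(n) + \sqrt{b(n)^2 - 4a(n)c(n)}\big)/(2a(n))$ where $a(n) = n(n+1)^2$, $b(n) = -8n(3n^2+5n+1)$, and $c(n) = 128(n-1)(n+1)^2$. -/

import Mathlib

set_option maxHeartbeats 1000000 in
/-- For every integer `n > 3`, `V_n / V_{n-1} ≥ (-b(n) + √(b(n)² - 4a(n)c(n)))/(2a(n))`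
for the Fennessey-Larcombe-French sequence. -/
theorem stmt_8 (V : ℕ → ℚ) (hV0 : V 0 = 1) (hV1 : V 1 = 8)
    (hrec : ∀ n : ℕ, 1 ≤ n →
      (n : ℚ) * (n + 1) ^ 2 * V (n + 1) =
        8 * n * (3 * n ^ 2 + 5 * n + 1) * V n
          - 128 * ((n : ℚ) - 1) * (n + 1) ^ 2 * V (n - 1)) :
    ∀ n : ℕ, 3 < n →
      ((V n : ℝ)) / ((V (n - 1) : ℝ)) ≥
        (8 * (n : ℝ) * (3 * (n : ℝ) ^ 2 + 5 * (n : ℝ) + 1) +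
            Real.sqrt (64 * ((n : ℝ) ^ 6 + 6 * (n : ℝ) ^ 5 + 15 * (n : ℝ) ^ 4
              + 26 * (n : ℝ) ^ 3 + 25 * (n : ℝ) ^ 2 + 8 * (n : ℝ)))) /
          (2 * (n : ℝ) * ((n : ℝ) + 1) ^ 2) := by
  -- compute the first few values
  have h2 := hrec 1 (by norm_num)
  have h3 := hrec 2 (by norm_num)
  have h4 := hrec 3 (by norm_num)
  norm_num [hV0, hV1] at h2
  norm_num [hV1] at h3
  norm_num at h4
  have hV2 : V 2 = 144 := by linarith
  have hV3 : V 3 = 2432 := by linarith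
  have hV4 : V 4 = 40000 := by linarith
  -- key claim over ℚ
  have key : ∀ n : ℕ, 4 ≤ n →
      0 < V (n - 1) ∧ 16 * ((n : ℚ) ^ 3 + 1) * V (n - 1) ≤ (n : ℚ) ^ 3 * V n := by
    intro n hn
    induction n with
    | zero => omega
    | succ m ih =>
      rcases Nat.lt_or_ge m 4 with hm | hm
      · have hm3 : m = 3 := by omega
        subst hm3
        constructor
        · norm_num [hV3]
        · norm_num [hV3, hV4]
      · obtain ⟨hpos, hineq⟩ := ih hm
        have hm1 : 1 ≤ m := by omega
        have hq4 : (4 : ℚ) ≤ (m : ℚ) := by exact_mod_cast hm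
        set q : ℚ := (m : ℚ) with hqdef
        have hq0 : (0 : ℚ) < q := by linarith
        have hq3 : (0 : ℚ) < q ^ 3 := by positivity
        have hVm : 0 < V m := by
          by_contra hc
          push_neg at hc
          have h161 : (0 : ℚ) < 16 * (q ^ 3 + 1) := by nlinarith [hq4]
          have hlt : (0 : ℚ) < 16 * (q ^ 3 + 1) * V (m - 1) := mul_pos h161 hpos
          have hle : q ^ 3 * V m ≤ 0 := mul_nonpos_of_nonneg_of_nonpos hq3.le hc
          linarith
        have hrec' := hrec m hm1
        constructor
        · simpa using hVm
        · have hE2 : ((q + 1) * (q ^ 3 + 1)) * (q * (q + 1) ^ 2 * V (m + 1)) =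
              ((q + 1) * (q ^ 3 + 1)) *
                (8 * q * (3 * q ^ 2 + 5 * q + 1) * V m
                  - 128 * (q - 1) * (q + 1) ^ 2 * V (m - 1)) := by
            rw [hrec']
          have hT1 : 0 ≤ 8 * (q - 1) * (q + 1) ^ 3 *
              (q ^ 3 * V m - 16 * (q ^ 3 + 1) * V (m - 1)) := by
            have h8 : 0 ≤ 8 * (q - 1) * (q + 1) ^ 3 := by nlinarith [hq4]
            have := sub_nonneg.mpr hineq
            exact mul_nonneg h8 this
          have hT2 : 0 ≤ 24 * q * (q ^ 2 - 1) * V m := by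
            have : 0 ≤ 24 * q * (q ^ 2 - 1) := by nlinarith [hq4]
            exact mul_nonneg this hVm.le
          have hqpos : (0 : ℚ) < q * (q ^ 3 + 1) := by nlinarith [hq4]
          have hG' : q * (q ^ 3 + 1) * (16 * ((q + 1) ^ 3 + 1) * V m) ≤
              q * (q ^ 3 + 1) * ((q + 1) ^ 3 * V (m + 1)) := by
            nlinarith [hE2, hT1, hT2]
          have := le_of_mul_le_mul_left hG' hqpos
          have hcast : ((m + 1 : ℕ) : ℚ) = q + 1 := by push_cast; ring
          simpa [hcast] using this
  intro n hn
  obtain ⟨hpos, hineq⟩ := key n (by omega)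
  set x : ℝ := (n : ℝ) with hxdef
  have hx4 : (4 : ℝ) ≤ x := by
    rw [hxdef]; exact_mod_cast (by omega : (4:ℕ) ≤ n)
  have hx0 : (0 : ℝ) < x := by linarith
  have hposR : (0 : ℝ) < ((V (n - 1) : ℚ) : ℝ) := by exact_mod_cast hpos
  have hineqR : 16 * (x ^ 3 + 1) * ((V (n - 1) : ℚ) : ℝ) ≤ x ^ 3 * ((V n : ℚ) : ℝ) := by
    rw [hxdef]; exact_mod_cast hineq
  -- V n / V (n-1) ≥ 16*(x^3+1)/x^3
  have h1 : 16 * (x ^ 3 + 1) / x ^ 3 ≤ ((V n : ℚ) : ℝ) / ((V (n - 1) : ℚ) : ℝ) := by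
    rw [div_le_div_iff₀ (by positivity) hposR]
    linarith [hineqR]
  -- sqrt bound
  have hx1 : (0 : ℝ) ≤ x + 1 := by linarith
  have hy0 : (0 : ℝ) ≤ (8 * x ^ 3 * (x ^ 2 + 3 * x + 3) + 32 * (x + 1) ^ 2) / x ^ 2 := by
    positivity
  have hD : 64 * (x ^ 6 + 6 * x ^ 5 + 15 * x ^ 4 + 26 * x ^ 3 + 25 * x ^ 2 + 8 * x) ≤
      ((8 * x ^ 3 * (x ^ 2 + 3 * x + 3) + 32 * (x + 1) ^ 2) / x ^ 2) ^ 2 := by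
    rw [div_pow, le_div_iff₀ (by positivity)]
    nlinarith [mul_nonneg (pow_nonneg hx0.le 3) (pow_nonneg hx1 3), pow_nonneg hx1 4]
  have hsq : Real.sqrt (64 * (x ^ 6 + 6 * x ^ 5 + 15 * x ^ 4 + 26 * x ^ 3
        + 25 * x ^ 2 + 8 * x)) ≤
      (8 * x ^ 3 * (x ^ 2 + 3 * x + 3) + 32 * (x + 1) ^ 2) / x ^ 2 := by
    calc Real.sqrt (64 * (x ^ 6 + 6 * x ^ 5 + 15 * x ^ 4 + 26 * x ^ 3 + 25 * x ^ 2 + 8 * x))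
        ≤ Real.sqrt (((8 * x ^ 3 * (x ^ 2 + 3 * x + 3) + 32 * (x + 1) ^ 2) / x ^ 2) ^ 2) :=
          Real.sqrt_le_sqrt hD
      _ = (8 * x ^ 3 * (x ^ 2 + 3 * x + 3) + 32 * (x + 1) ^ 2) / x ^ 2 := Real.sqrt_sq hy0
  have h2' : (8 * x * (3 * x ^ 2 + 5 * x + 1) +
      Real.sqrt (64 * (x ^ 6 + 6 * x ^ 5 + 15 * x ^ 4 + 26 * x ^ 3 + 25 * x ^ 2 + 8 * x))) /
      (2 * x * (x + 1) ^ 2) ≤ 16 * (x ^ 3 + 1) / x ^ 3 := by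
    rw [div_le_div_iff₀ (by positivity) (by positivity)]
    have hstep : (8 * x * (3 * x ^ 2 + 5 * x + 1) +
        Real.sqrt (64 * (x ^ 6 + 6 * x ^ 5 + 15 * x ^ 4 + 26 * x ^ 3 + 25 * x ^ 2 + 8 * x)))
        * x ^ 3 ≤
        (8 * x * (3 * x ^ 2 + 5 * x + 1) +
          (8 * x ^ 3 * (x ^ 2 + 3 * x + 3) + 32 * (x + 1) ^ 2) / x ^ 2) * x ^ 3 := by
      have := mul_le_mul_of_nonneg_right (add_le_add_right hsq
        (8 * x * (3 * x ^ 2 + 5 * x + 1))) (by positivity : (0:ℝ) ≤ x ^ 3)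
      exact this
    refine hstep.trans (le_of_eq ?_)
    have hx2 : x ^ 2 ≠ 0 := by positivity
    field_simp
    ring
  exact le_trans h2' h1
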